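/- Let R be a commutative unital ring, G an ample groupoid, and suppose the groupoid convolution algebra RG is a prime ring. Then R is an integral domain. -/

import Mathlib

universe u

/-- An étale topological groupoid: arrows form a topological space, units are
identified with idempotent arrows via the domain map `d` and range map `r`;
the domain map is a local homeomorphism. -/
structure EtaleGroupoid : Type (u + 1) where
  Arr : Type u
  top : TopologicalSpace Arr
  d : Arr → Arr
  r : Arr → Arr
  comp : Arr → Arr → Arr
  inv : Arr → Arr
  d_d : ∀ g, d (d g) = d g
  r_d : ∀ g, r (d g) = d g
  d_r : ∀ g, d (r g) = r g
  r_r : ∀ g, r (r g) = r g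
  d_comp : ∀ g h, d g = r h → d (comp g h) = d h
  r_comp : ∀ g h, d g = r h → r (comp g h) = r g
  comp_assoc : ∀ g h k, d g = r h → d h = r k → comp (comp g h) k = comp g (comp h k)
  comp_unit_right : ∀ g, comp g (d g) = g
  comp_unit_left : ∀ g, comp (r g) g = g
  d_inv : ∀ g, d (inv g) = r g
  r_inv : ∀ g, r (inv g) = d g
  inv_inv : ∀ g, inv (inv g) = g
  inv_comp : ∀ g, comp (inv g) g = d g
  comp_inv : ∀ g, comp g (inv g) = r g
  continuous_d : @Continuous Arr Arr top top d
  continuous_r : @Continuous Arr Arr top top r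
  continuous_inv : @Continuous Arr Arr top top inv
  continuous_comp : @Continuous {p : Arr × Arr // d p.1 = r p.2} Arr
    (@instTopologicalSpaceSubtype _ _ (@instTopologicalSpaceProd _ _ top top)) top
    (fun p => comp p.val.1 p.val.2)
  etale : ∀ g : Arr, ∃ U : Set Arr, @IsOpen Arr top U ∧ g ∈ U ∧ Set.InjOn d U ∧
    ∀ V, V ⊆ U → @IsOpen Arr top V → @IsOpen Arr top (d '' V)

instance (G : EtaleGroupoid) : TopologicalSpace G.Arr := G.top

namespace EtaleGroupoid

variable (G : EtaleGroupoid)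

/-- The unit space `G⁽⁰⁾`, identified with the set of unit arrows. -/
def units : Set G.Arr := Set.range G.d

/-- A subset of the unit space is invariant if it is a union of orbits. -/
def Invariant (X : Set G.Arr) : Prop := ∀ g : G.Arr, G.d g ∈ X → G.r g ∈ X

/-- The orbit of a unit `x`. -/
def orbit (x : G.Arr) : Set G.Arr := {y | ∃ g, G.d g = x ∧ G.r g = y}

/-- `U` is an open subset of the unit space (open in the subspace topology). -/
def UnitsOpen (U : Set G.Arr) : Prop :=
  U ⊆ G.units ∧ IsOpen (Subtype.val ⁻¹' U : Set ↥G.units)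

/-- `C` is a closed subset of the unit space (closed in the subspace topology). -/
def UnitsClosed (C : Set G.Arr) : Prop :=
  C ⊆ G.units ∧ IsClosed (Subtype.val ⁻¹' C : Set ↥G.units)

/-- `X` is dense in the unit space. -/
def UnitsDense (X : Set G.Arr) : Prop :=
  Dense (Subtype.val ⁻¹' X : Set ↥G.units)

/-- `X` is nowhere dense in the unit space. -/
def UnitsNowhereDense (X : Set G.Arr) : Prop :=
  interior (closure (Subtype.val ⁻¹' X : Set ↥G.units)) = ∅

/-- Topological transitivity: every non-empty open invariant subset of the
unit space is dense. -/
def TopTransitive : Prop :=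
  ∀ U : Set G.Arr, G.UnitsOpen U → G.Invariant U → U.Nonempty → G.UnitsDense U

end EtaleGroupoid

namespace EtaleGroupoid

variable (G : EtaleGroupoid)

/-- The underlying set of the groupoid convolution algebra `RG`: the `R`-span of
characteristic functions of compact open subsets of the arrow space. -/
def AlgebraSet (R : Type) [CommRing R] : Set (G.Arr → R) :=
  (Submodule.span R {f : G.Arr → R | ∃ U : Set G.Arr,
      IsCompact U ∧ IsOpen U ∧ f = Set.indicator U fun _ => (1 : R)} :
    Submodule R (G.Arr → R))

/-- Convolution: `(f ⋆ g)(x) = ∑_{d h = d x} f (x h⁻¹) g (h)`. -/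
noncomputable def conv {R : Type} [CommRing R] (f g : G.Arr → R) : G.Arr → R := fun x =>
  ∑ᶠ (h : G.Arr) (_ : G.d h = G.d x), f (G.comp x (G.inv h)) * g h

/-- The convolution algebra `RG` is a prime ring (elementwise formulation). -/
def AlgPrime (R : Type) [CommRing R] : Prop :=
  (∃ f ∈ G.AlgebraSet R, f ≠ 0) ∧
  ∀ f ∈ G.AlgebraSet R, ∀ g ∈ G.AlgebraSet R,
    (∀ h ∈ G.AlgebraSet R, G.conv (G.conv f h) g = 0) → f = 0 ∨ g = 0

/-- The convolution algebra `RG` is a semiprime ring (elementwise formulation). -/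
def AlgSemiprime (R : Type) [CommRing R] : Prop :=
  ∀ f ∈ G.AlgebraSet R, (∀ h ∈ G.AlgebraSet R, G.conv (G.conv f h) f = 0) → f = 0

/-- `X ⊆ G⁽⁰⁾` is `R`-dense: every non-zero element of `RG` is non-zero at some
arrow whose domain lies in `X`. -/
def RDense (R : Type) [CommRing R] (X : Set G.Arr) : Prop :=
  ∀ f ∈ G.AlgebraSet R, f ≠ (0 : G.Arr → R) → ∃ g : G.Arr, f g ≠ 0 ∧ G.d g ∈ X

/-- An étale groupoid is ample if its unit space is (locally compact) Hausdorff
with a basis of compact open sets. -/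
def Ample : Prop :=
  T2Space ↥G.units ∧
  ∀ x ∈ G.units, ∀ U : Set G.Arr, G.UnitsOpen U → x ∈ U →
    ∃ K : Set G.Arr, K ⊆ U ∧ x ∈ K ∧ IsCompact K ∧ G.UnitsOpen K

/-- A groupoid is effective if the interior of the isotropy bundle is the unit
space. -/
def Effective : Prop := interior {g : G.Arr | G.d g = G.r g} = G.units

end EtaleGroupoid

open Function in
private lemma finsum_prop_mul_left' {R : Type} [CommRing R] (p : Prop) (a x : R) :
    (∑ᶠ _ : p, a * x) = a * ∑ᶠ _ : p, x := by
  classical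
  rw [finsum_eq_if, finsum_eq_if, mul_ite, mul_zero]

open Function in
private lemma finsum_mul_eq_zero' {R : Type} [CommRing R] {a b : R} (hab : a * b = 0)
    {ι : Type*} (c : ι → R) : (∑ᶠ i, a * c i) * b = 0 := by
  by_cases h : (support fun i => a * c i).Finite
  · rw [finsum_mul' _ _ h]
    have hz : ∀ i : ι, a * c i * b = 0 := fun i => by
      have h1 : a * c i * b = a * b * c i := by ring
      rw [h1, hab, zero_mul]
    simp [hz]
  · rw [finsum_of_infinite_support (by simpa using h), zero_mul]

private lemma conv_smul_smul_zero {R : Type} [CommRing R] (G : EtaleGroupoid)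
    {a b : R} (hab : a * b = 0) (u v h : G.Arr → R) :
    G.conv (G.conv (a • u) h) (b • v) = 0 := by
  have key : ∀ y : G.Arr, (G.conv (a • u) h) y * b = 0 := by
    intro y
    show (∑ᶠ (k : G.Arr) (_ : G.d k = G.d y), (a • u) (G.comp y (G.inv k)) * h k) * b = 0
    have hcong : ∀ k : G.Arr,
        (∑ᶠ _ : G.d k = G.d y, (a • u) (G.comp y (G.inv k)) * h k)
          = a * ∑ᶠ _ : G.d k = G.d y, u (G.comp y (G.inv k)) * h k := by
      intro k
      rw [← finsum_prop_mul_left']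
      congr 1
      funext _
      simp [Pi.smul_apply, smul_eq_mul, mul_assoc]
    rw [finsum_congr hcong]
    exact finsum_mul_eq_zero' hab _
  funext x
  show (∑ᶠ (k : G.Arr) (_ : G.d k = G.d x),
      (G.conv (a • u) h) (G.comp x (G.inv k)) * (b • v) k) = (0 : R)
  have hz : ∀ k : G.Arr,
      (∑ᶠ _ : G.d k = G.d x, (G.conv (a • u) h) (G.comp x (G.inv k)) * (b • v) k) = 0 := by
    intro k
    have ht : (G.conv (a • u) h) (G.comp x (G.inv k)) * (b • v) k = 0 := by
      rw [Pi.smul_apply, smul_eq_mul, ← mul_assoc, key, zero_mul]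
    simp only [ht, finsum_zero]
  rw [finsum_congr hz, finsum_zero]

/-- If the convolution algebra `RG` of an ample groupoid is a
prime ring, then `R` is an integral domain. -/
theorem stmt5 (R : Type) [CommRing R] (G : EtaleGroupoid) (hample : G.Ample)
    (hprime : G.AlgPrime R) : IsDomain R := by
  obtain ⟨⟨f0, hf0mem, hf0ne⟩, hpr⟩ := hprime
  obtain ⟨x, hx⟩ : ∃ x, f0 x ≠ 0 := by
    by_contra hc
    push_neg at hc
    exact hf0ne (funext hc)
  haveI : Nontrivial R := ⟨⟨f0 x, 0, hx⟩⟩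
  have hspan : f0 ∈ Submodule.span R {f : G.Arr → R | ∃ U : Set G.Arr,
      IsCompact U ∧ IsOpen U ∧ f = Set.indicator U fun _ => (1 : R)} := hf0mem
  have hU : ∃ U : Set G.Arr, IsCompact U ∧ IsOpen U ∧ x ∈ U := by
    refine Submodule.span_induction (p := fun f _ => f x ≠ 0 →
        ∃ U : Set G.Arr, IsCompact U ∧ IsOpen U ∧ x ∈ U) ?_ ?_ ?_ ?_ hspan hx
    · rintro f ⟨U, hUc, hUo, rfl⟩ hfx
      refine ⟨U, hUc, hUo, ?_⟩
      by_contra hxU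
      exact hfx (Set.indicator_of_notMem hxU _)
    · intro h0; simp at h0
    · intro f g _ _ ihf ihg hfg
      by_cases hf : f x ≠ 0
      · exact ihf hf
      · push_neg at hf
        refine ihg fun hg => hfg ?_
        simp [Pi.add_apply, hf, hg]
    · intro r f _ ih hr
      refine ih fun hf => hr ?_
      simp [Pi.smul_apply, hf]
  obtain ⟨U, hUc, hUo, hxU⟩ := hU
  set u : G.Arr → R := Set.indicator U fun _ => (1 : R) with hu_def
  have hu : u ∈ Submodule.span R {f : G.Arr → R | ∃ U : Set G.Arr,
      IsCompact U ∧ IsOpen U ∧ f = Set.indicator U fun _ => (1 : R)} :=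
    Submodule.subset_span ⟨U, hUc, hUo, rfl⟩
  haveI : NoZeroDivisors R := by
    refine ⟨fun {a b} hab => ?_⟩
    have hau : a • u ∈ G.AlgebraSet R := Submodule.smul_mem _ a hu
    have hbu : b • u ∈ G.AlgebraSet R := Submodule.smul_mem _ b hu
    have hkey : ∀ h ∈ G.AlgebraSet R, G.conv (G.conv (a • u) h) (b • u) = 0 :=
      fun h _ => conv_smul_smul_zero G hab u u h
    rcases hpr (a • u) hau (b • u) hbu hkey with h | h
    · left
      have := congrFun h x
      simpa [hu_def, Set.indicator_of_mem hxU] using this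
    · right
      have := congrFun h x
      simpa [hu_def, Set.indicator_of_mem hxU] using this
  exact NoZeroDivisors.to_isDomain R
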